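/- Let m ≥ 1 and t ≥ 0. Let τ̃, a : ℝ × ℝ → ℝ be continuously differentiable and b : ℝ × ℝ → ℝ continuous, with m⁻¹ ≤ τ̃(r,s) ≤ m, |a(r,s)| ≤ m and |b(r,s)| ≤ m for all (r,s), and suppose that for all (r,s) ∈ ℝ²: ∂_r τ̃(r,s) = a(r,s) − τ̃(r,s) + ∂_s(s · τ̃(r,s)) and ∂_r a(r,s) = b(r,s) − a(r,s) + ∂_s(s · a(r,s)). Let u : ℝ → ℝ be differentiable with t = ∫₀^{u(r)} τ̃(r,s) ds and 0 ≤ u(r) ≤ m t for all r, and define v(r) = t − ∫₀^{u(r)} a(r,s) ds. Then |v'(r)| ≤ 6 m⁴ t for all r ∈ ℝ. -/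

import Mathlib

open MeasureTheory intervalIntegral

open Filter Asymptotics Metric in
private lemma movingEndpoint_hasDerivAt (f : ℝ × ℝ → ℝ) (hf : Continuous f)
    (u : ℝ → ℝ) (u' r₀ : ℝ) (hu : HasDerivAt u u' r₀) :
    HasDerivAt (fun r => ∫ s in (u r₀)..(u r), f (r, s)) (f (r₀, u r₀) * u') r₀ := by
  set y₀ := u r₀ with hy₀
  set c := f (r₀, y₀) with hc
  have hint : ∀ r lo hi, IntervalIntegrable (fun s => f (r, s)) volume lo hi :=
    fun r lo hi => (hf.comp (Continuous.prodMk_right r)).intervalIntegrable lo hi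
  have key : ∀ r, (∫ s in y₀..(u r), f (r, s))
      = (∫ s in y₀..(u r), (f (r, s) - c)) + c * (u r - y₀) := by
    intro r
    rw [intervalIntegral.integral_sub (hint r _ _) (intervalIntegrable_const),
      intervalIntegral.integral_const]
    simp [smul_eq_mul]
    ring
  set E₁ : ℝ → ℝ := fun r => ∫ s in y₀..(u r), (f (r, s) - c) with hE₁def
  have hE₁o : E₁ =o[nhds r₀] fun r => r - r₀ := by
    rw [Asymptotics.isLittleO_iff]
    intro ε hε
    set C := |u'| + 1 with hC
    have hCpos : (0:ℝ) < C := by positivity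
    have hcont : ContinuousAt f (r₀, y₀) := hf.continuousAt
    rcases Metric.continuousAt_iff.1 hcont (ε / C) (by positivity) with ⟨δ, hδ, hball⟩
    have h1 : ∀ᶠ r in nhds r₀, ‖u r - u r₀ - (r - r₀) • u'‖ ≤ 1 * ‖r - r₀‖ :=
      Asymptotics.isLittleO_iff.1 (hasDerivAt_iff_isLittleO.1 hu) one_pos
    have h2 : ∀ᶠ r in nhds r₀, dist r r₀ < min δ (δ / C) :=
      Metric.eventually_nhds_iff.2 ⟨min δ (δ / C), lt_min hδ (by positivity), fun {_} hy => hy⟩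
    filter_upwards [h1, h2] with r hr1 hr2
    rw [Real.norm_eq_abs, smul_eq_mul, one_mul, Real.norm_eq_abs] at hr1
    rw [Real.dist_eq, lt_min_iff] at hr2
    have hdy : |u r - y₀| ≤ C * |r - r₀| := by
      have heq : u r - y₀ = (u r - u r₀ - (r - r₀) * u') + (r - r₀) * u' := by
        rw [hy₀]; ring
      calc |u r - y₀| ≤ |u r - u r₀ - (r - r₀) * u'| + |(r - r₀) * u'| := by
            conv_lhs => rw [heq]
            exact abs_add_le _ _
        _ ≤ |r - r₀| + |r - r₀| * |u'| := by rw [abs_mul]; linarith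
        _ = C * |r - r₀| := by rw [hC]; ring
    have hboundpt : ∀ s ∈ Set.uIoc y₀ (u r), ‖f (r, s) - c‖ ≤ ε / C := by
      intro s hs
      have hs' : |s - y₀| ≤ |u r - y₀| := by
        have ha1 := le_abs_self (u r - y₀)
        have ha2 := neg_abs_le (u r - y₀)
        rcases Set.mem_uIoc.1 hs with ⟨hl, hr⟩ | ⟨hl, hr⟩ <;> rw [abs_le] <;>
          constructor <;> linarith
      have hdist : dist (r, s) (r₀, y₀) < δ := by
        rw [Prod.dist_eq, max_lt_iff]
        constructor
        · rw [Real.dist_eq]; exact hr2.1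
        · rw [Real.dist_eq]
          calc |s - y₀| ≤ C * |r - r₀| := hs'.trans hdy
            _ < C * (δ / C) := by
                exact mul_lt_mul_of_pos_left hr2.2 hCpos
            _ = δ := by field_simp
      have := hball hdist
      rw [Real.dist_eq] at this
      exact this.le
    calc ‖E₁ r‖ ≤ (ε / C) * |u r - y₀| :=
          intervalIntegral.norm_integral_le_of_norm_le_const hboundpt
      _ ≤ (ε / C) * (C * |r - r₀|) := by
          exact mul_le_mul_of_nonneg_left hdy (by positivity)
      _ = ε * |r - r₀| := by field_simp
      _ = ε * ‖r - r₀‖ := by rw [Real.norm_eq_abs]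
  have hE₁ : HasDerivAt E₁ 0 r₀ := by
    rw [hasDerivAt_iff_isLittleO]
    simpa [hE₁def, ← hy₀, intervalIntegral.integral_same] using hE₁o
  have h2 : HasDerivAt (fun r => c * (u r - y₀)) (c * u') r₀ := by
    simpa using ((hu.sub_const y₀).const_mul c)
  have heq : (fun r => ∫ s in y₀..(u r), f (r, s)) = fun r => E₁ r + c * (u r - y₀) :=
    funext key
  rw [show f (r₀, u r₀) * u' = c * u' from rfl] at *
  rw [heq]
  have := hE₁.add h2; rw [zero_add] at this; exact this

open Filter Asymptotics Metric in
private lemma param_hasDerivAt (f : ℝ × ℝ → ℝ) (hf : ContDiff ℝ 1 f) (c d r₀ : ℝ) :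
    HasDerivAt (fun r => ∫ s in c..d, f (r, s))
      (∫ s in c..d, deriv (fun r' => f (r', s)) r₀) r₀ := by
  have hfd : Differentiable ℝ f := hf.differentiable one_ne_zero
  set F' : ℝ → ℝ → ℝ := fun x s => fderiv ℝ f (x, s) (1, 0) with hF'
  have hder : ∀ x s : ℝ, HasDerivAt (fun r' => f (r', s)) (F' x s) x := by
    intro x s
    have h1 : HasDerivAt (fun r' : ℝ => (r', s)) ((1:ℝ), (0:ℝ)) x :=
      (hasDerivAt_id x).prodMk (hasDerivAt_const x s)
    exact ((hfd (x, s)).hasFDerivAt).comp_hasDerivAt x h1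
  obtain ⟨K, hK⟩ := ((isCompact_closedBall r₀ 1).prod isCompact_uIcc).exists_bound_of_continuousOn
    ((hf.continuous_fderiv one_ne_zero).continuousOn (s := closedBall r₀ 1 ×ˢ Set.uIcc c d))
  have hbound : ∀ s ∈ Set.uIoc c d, ∀ x ∈ ball r₀ 1, ‖F' x s‖ ≤ K := by
    intro s hs x hx
    have hmem : (x, s) ∈ closedBall r₀ 1 ×ˢ Set.uIcc c d :=
      ⟨ball_subset_closedBall hx, Set.uIoc_subset_uIcc hs⟩
    calc ‖F' x s‖ ≤ ‖fderiv ℝ f (x, s)‖ * ‖((1:ℝ), (0:ℝ))‖ :=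
          ContinuousLinearMap.le_opNorm _ _
      _ ≤ K * 1 := by
          apply mul_le_mul (hK _ hmem) _ (norm_nonneg _) ((norm_nonneg _).trans (hK _ hmem))
          simp [Prod.norm_def]
      _ = K := mul_one K
  have main := intervalIntegral.hasDerivAt_integral_of_dominated_loc_of_deriv_le
    (F := fun x s => f (x, s)) (F' := F') (x₀ := r₀) (a := c) (b := d) (μ := volume)
    (bound := fun _ => K) (ball_mem_nhds r₀ one_pos)
    (Filter.Eventually.of_forall fun x =>
      ((hf.continuous.comp (Continuous.prodMk_right x)).aestronglyMeasurable))
    ((hf.continuous.comp (Continuous.prodMk_right r₀)).intervalIntegrable _ _)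
    (Continuous.aestronglyMeasurable (by
      exact ((hf.continuous_fderiv one_ne_zero).comp (Continuous.prodMk_right r₀)).clm_apply
        continuous_const))
    (Filter.Eventually.of_forall fun s hs x hx => hbound s hs x hx)
    intervalIntegrable_const
    (Filter.Eventually.of_forall fun s _ x _ => hder x s)
  have hint : (∫ s in c..d, deriv (fun r' => f (r', s)) r₀) = ∫ s in c..d, F' r₀ s := by
    congr 1
    funext s
    exact (hder r₀ s).deriv
  rw [hint]
  exact main.2

private lemma ftc_aux (f : ℝ × ℝ → ℝ) (hf : ContDiff ℝ 1 f) (r y : ℝ) :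
    (∫ s in (0:ℝ)..y, deriv (fun s' => s' * f (r, s')) s) = y * f (r, y) := by
  have hg : ContDiff ℝ 1 (fun s => f (r, s)) := hf.comp (contDiff_const.prodMk contDiff_id)
  have hC1 : ContDiff ℝ 1 (fun s' => s' * f (r, s')) := contDiff_id.mul hg
  have := intervalIntegral.integral_deriv_eq_sub
    (f := fun s' => s' * f (r, s')) (a := (0:ℝ)) (b := y)
    (fun x _ => (hC1.differentiable one_ne_zero).differentiableAt)
    ((hC1.continuous_deriv le_rfl).intervalIntegrable _ _)
  rw [this]
  simp


/-- (Abstract Lemma 4.3, control on the distortion.) Under the structural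
identities `∂_r τ = a - τ + ∂_s(s·τ)` and `∂_r a = b - a + ∂_s(s·a)`, with
`m⁻¹ ≤ τ ≤ m`, `|a| ≤ m`, `|b| ≤ m`, `0 ≤ u ≤ m t` and `t = ∫₀^{u(r)} τ(r,s) ds`, the
function `v(r) = t - ∫₀^{u(r)} a(r,s) ds` satisfies `|v'(r)| ≤ 6 m⁴ t`. -/
theorem distortion_deriv_bound
    (m t : ℝ) (hm : 1 ≤ m) (ht : 0 ≤ t)
    (τ a b : ℝ × ℝ → ℝ)
    (hτ : ContDiff ℝ 1 τ) (ha : ContDiff ℝ 1 a) (hb : Continuous b)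
    (hτ_lb : ∀ p : ℝ × ℝ, m⁻¹ ≤ τ p) (hτ_ub : ∀ p : ℝ × ℝ, τ p ≤ m)
    (ha_b : ∀ p : ℝ × ℝ, |a p| ≤ m) (hb_b : ∀ p : ℝ × ℝ, |b p| ≤ m)
    (hstruct₁ : ∀ r s : ℝ,
      deriv (fun r' => τ (r', s)) r =
        a (r, s) - τ (r, s) + deriv (fun s' => s' * τ (r, s')) s)
    (hstruct₂ : ∀ r s : ℝ,
      deriv (fun r' => a (r', s)) r =
        b (r, s) - a (r, s) + deriv (fun s' => s' * a (r, s')) s)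
    (u : ℝ → ℝ) (hu : Differentiable ℝ u)
    (hu_def : ∀ r : ℝ, t = ∫ s in (0:ℝ)..(u r), τ (r, s))
    (hu_bd : ∀ r : ℝ, 0 ≤ u r ∧ u r ≤ m * t)
    (v : ℝ → ℝ) (hv : ∀ r : ℝ, v r = t - ∫ s in (0:ℝ)..(u r), a (r, s)) :
    ∀ r : ℝ, |deriv v r| ≤ 6 * m ^ 4 * t := by
  intro r₀
  have hm0 : (0:ℝ) < m := by linarith
  have hy0 : 0 ≤ u r₀ := (hu_bd r₀).1
  have hy1 : u r₀ ≤ m * t := (hu_bd r₀).2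
  -- combined Leibniz rule
  have hD : ∀ (f : ℝ × ℝ → ℝ), ContDiff ℝ 1 f →
      HasDerivAt (fun r => ∫ s in (0:ℝ)..(u r), f (r, s))
        ((∫ s in (0:ℝ)..(u r₀), deriv (fun r' => f (r', s)) r₀)
          + f (r₀, u r₀) * deriv u r₀) r₀ := by
    intro f hf
    have h1 := param_hasDerivAt f hf 0 (u r₀) r₀
    have h2 := movingEndpoint_hasDerivAt f hf.continuous u (deriv u r₀) r₀ (hu r₀).hasDerivAt
    apply (h1.add h2).congr_of_eventuallyEq
    apply Filter.Eventually.of_forall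
    intro r
    exact (intervalIntegral.integral_add_adjacent_intervals
      ((hf.continuous.comp (Continuous.prodMk_right r)).intervalIntegrable _ _)
      ((hf.continuous.comp (Continuous.prodMk_right r)).intervalIntegrable _ _)).symm
  -- integrability helpers
  have hint_a : ∀ lo hi : ℝ, IntervalIntegrable (fun s => a (r₀, s)) volume lo hi :=
    fun lo hi => (ha.continuous.comp (Continuous.prodMk_right r₀)).intervalIntegrable _ _
  have hint_τ : ∀ lo hi : ℝ, IntervalIntegrable (fun s => τ (r₀, s)) volume lo hi :=
    fun lo hi => (hτ.continuous.comp (Continuous.prodMk_right r₀)).intervalIntegrable _ _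
  have hint_b : ∀ lo hi : ℝ, IntervalIntegrable (fun s => b (r₀, s)) volume lo hi :=
    fun lo hi => (hb.comp (Continuous.prodMk_right r₀)).intervalIntegrable _ _
  have hderτC : Continuous (fun s => deriv (fun s' => s' * τ (r₀, s')) s) :=
    (contDiff_id.mul (hτ.comp (contDiff_const.prodMk contDiff_id))).continuous_deriv le_rfl
  have hderaC : Continuous (fun s => deriv (fun s' => s' * a (r₀, s')) s) :=
    (contDiff_id.mul (ha.comp (contDiff_const.prodMk contDiff_id))).continuous_deriv le_rfl
  -- the two parametric-derivative integrals
  have hIτ : (∫ s in (0:ℝ)..(u r₀), deriv (fun r' => τ (r', s)) r₀)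
      = (∫ s in (0:ℝ)..(u r₀), a (r₀, s)) - t + u r₀ * τ (r₀, u r₀) := by
    calc (∫ s in (0:ℝ)..(u r₀), deriv (fun r' => τ (r', s)) r₀)
        = ∫ s in (0:ℝ)..(u r₀),
            (a (r₀, s) - τ (r₀, s) + deriv (fun s' => s' * τ (r₀, s')) s) := by
          simp only [hstruct₁]
      _ = ((∫ s in (0:ℝ)..(u r₀), a (r₀, s)) - ∫ s in (0:ℝ)..(u r₀), τ (r₀, s))
          + ∫ s in (0:ℝ)..(u r₀), deriv (fun s' => s' * τ (r₀, s')) s := by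
          rw [intervalIntegral.integral_add ((hint_a _ _).sub (hint_τ _ _))
              (hderτC.intervalIntegrable _ _),
            intervalIntegral.integral_sub (hint_a _ _) (hint_τ _ _)]
      _ = (∫ s in (0:ℝ)..(u r₀), a (r₀, s)) - t + u r₀ * τ (r₀, u r₀) := by
          rw [ftc_aux τ hτ r₀ (u r₀), ← hu_def r₀]
  have hIa : (∫ s in (0:ℝ)..(u r₀), deriv (fun r' => a (r', s)) r₀)
      = (∫ s in (0:ℝ)..(u r₀), b (r₀, s)) - (∫ s in (0:ℝ)..(u r₀), a (r₀, s))
        + u r₀ * a (r₀, u r₀) := by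
    calc (∫ s in (0:ℝ)..(u r₀), deriv (fun r' => a (r', s)) r₀)
        = ∫ s in (0:ℝ)..(u r₀),
            (b (r₀, s) - a (r₀, s) + deriv (fun s' => s' * a (r₀, s')) s) := by
          simp only [hstruct₂]
      _ = ((∫ s in (0:ℝ)..(u r₀), b (r₀, s)) - ∫ s in (0:ℝ)..(u r₀), a (r₀, s))
          + ∫ s in (0:ℝ)..(u r₀), deriv (fun s' => s' * a (r₀, s')) s := by
          rw [intervalIntegral.integral_add ((hint_b _ _).sub (hint_a _ _))
              (hderaC.intervalIntegrable _ _),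
            intervalIntegral.integral_sub (hint_b _ _) (hint_a _ _)]
      _ = _ := by rw [ftc_aux a ha r₀ (u r₀)]
  -- key identity from the constancy of t
  have hτeq : ((∫ s in (0:ℝ)..(u r₀), deriv (fun r' => τ (r', s)) r₀)
      + τ (r₀, u r₀) * deriv u r₀) = 0 := by
    have h2 : HasDerivAt (fun r => ∫ s in (0:ℝ)..(u r), τ (r, s)) 0 r₀ := by
      have he : (fun r => ∫ s in (0:ℝ)..(u r), τ (r, s)) = fun _ => t :=
        funext fun r => (hu_def r).symm
      rw [he]; exact hasDerivAt_const r₀ t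
    exact (hD τ hτ).unique h2
  have hkey : τ (r₀, u r₀) * deriv u r₀
      = t - (∫ s in (0:ℝ)..(u r₀), a (r₀, s)) - u r₀ * τ (r₀, u r₀) := by
    rw [hIτ] at hτeq; linarith
  -- bounds on the integrals
  have habs_int : ∀ (g : ℝ → ℝ), (∀ s : ℝ, |g s| ≤ m) →
      |∫ s in (0:ℝ)..(u r₀), g s| ≤ m * (m * t) := by
    intro g hg
    have h1 : ‖∫ s in (0:ℝ)..(u r₀), g s‖ ≤ m * |u r₀ - 0| :=
      intervalIntegral.norm_integral_le_of_norm_le_const fun s _ => hg s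
    rw [Real.norm_eq_abs, sub_zero, abs_of_nonneg hy0] at h1
    calc |∫ s in (0:ℝ)..(u r₀), g s| ≤ m * u r₀ := h1
      _ ≤ m * (m * t) := mul_le_mul_of_nonneg_left hy1 hm0.le
  have hA : |∫ s in (0:ℝ)..(u r₀), a (r₀, s)| ≤ m * (m * t) :=
    habs_int _ fun s => ha_b (r₀, s)
  have hB : |∫ s in (0:ℝ)..(u r₀), b (r₀, s)| ≤ m * (m * t) :=
    habs_int _ fun s => hb_b (r₀, s)
  have hτp_pos : 0 < τ (r₀, u r₀) :=
    lt_of_lt_of_le (by positivity) (hτ_lb (r₀, u r₀))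
  have hXτ : |u r₀ * τ (r₀, u r₀)| ≤ m * (m * t) := by
    rw [abs_mul, abs_of_nonneg hy0, abs_of_pos hτp_pos]
    calc u r₀ * τ (r₀, u r₀) ≤ (m * t) * m := by
          apply mul_le_mul hy1 (hτ_ub _) hτp_pos.le (by positivity)
      _ = m * (m * t) := by ring
  have hXa : |u r₀ * a (r₀, u r₀)| ≤ m * (m * t) := by
    rw [abs_mul, abs_of_nonneg hy0]
    calc u r₀ * |a (r₀, u r₀)| ≤ (m * t) * m :=
          mul_le_mul hy1 (ha_b _) (abs_nonneg _) (by positivity)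
      _ = m * (m * t) := by ring
  -- bound on u'
  have htriple : ∀ x y z : ℝ, |x - y - z| ≤ |x| + |y| + |z| := by
    intro x y z
    calc |x - y - z| ≤ |x - y| + |z| := abs_sub _ _
      _ ≤ |x| + |y| + |z| := by
        have := abs_sub x y
        linarith
  have h1 : |τ (r₀, u r₀) * deriv u r₀| ≤ t + m * (m * t) + m * (m * t) := by
    rw [hkey]
    calc |t - (∫ s in (0:ℝ)..(u r₀), a (r₀, s)) - u r₀ * τ (r₀, u r₀)|
        ≤ |t| + |∫ s in (0:ℝ)..(u r₀), a (r₀, s)| + |u r₀ * τ (r₀, u r₀)| := htriple _ _ _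
      _ ≤ t + m * (m * t) + m * (m * t) := by
          rw [abs_of_nonneg ht]; linarith
  have hu' : |deriv u r₀| ≤ 3 * m ^ 3 * t := by
    have h3 : |deriv u r₀| * m⁻¹ ≤ |deriv u r₀| * τ (r₀, u r₀) :=
      mul_le_mul_of_nonneg_left (hτ_lb _) (abs_nonneg _)
    have h4 : |deriv u r₀| * τ (r₀, u r₀) = |τ (r₀, u r₀) * deriv u r₀| := by
      rw [abs_mul, abs_of_pos hτp_pos]; ring
    have h5 : |deriv u r₀| ≤ (t + m * (m * t) + m * (m * t)) * m := by
      calc |deriv u r₀| = |deriv u r₀| * m⁻¹ * m := by field_simp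
        _ ≤ (|deriv u r₀| * τ (r₀, u r₀)) * m := mul_le_mul_of_nonneg_right h3 hm0.le
        _ = |τ (r₀, u r₀) * deriv u r₀| * m := by rw [h4]
        _ ≤ (t + m * (m * t) + m * (m * t)) * m := mul_le_mul_of_nonneg_right h1 hm0.le
    nlinarith [mul_nonneg ht hm0.le, sq_nonneg (m - 1), sq_nonneg m,
      mul_nonneg (mul_nonneg ht hm0.le) hm0.le]
  -- derivative of v
  have hvD : HasDerivAt v
      (0 - ((∫ s in (0:ℝ)..(u r₀), deriv (fun r' => a (r', s)) r₀)
        + a (r₀, u r₀) * deriv u r₀)) r₀ := by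
    have h1 := (hasDerivAt_const r₀ t).sub (hD a ha)
    have he : (fun r => t - ∫ s in (0:ℝ)..(u r), a (r, s)) = v :=
      funext fun r => (hv r).symm
    rw [← he]; exact h1
  have hdv : deriv v r₀
      = -(((∫ s in (0:ℝ)..(u r₀), b (r₀, s)) - (∫ s in (0:ℝ)..(u r₀), a (r₀, s))
        + u r₀ * a (r₀, u r₀)) + a (r₀, u r₀) * deriv u r₀) := by
    rw [hvD.deriv, hIa]; ring
  rw [hdv, abs_neg]
  have hlast : |a (r₀, u r₀) * deriv u r₀| ≤ m * (3 * m ^ 3 * t) := by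
    rw [abs_mul]
    exact mul_le_mul (ha_b _) hu' (abs_nonneg _) hm0.le
  have hsum : |((∫ s in (0:ℝ)..(u r₀), b (r₀, s)) - (∫ s in (0:ℝ)..(u r₀), a (r₀, s))
        + u r₀ * a (r₀, u r₀)) + a (r₀, u r₀) * deriv u r₀|
      ≤ (m * (m * t) + m * (m * t) + m * (m * t)) + m * (3 * m ^ 3 * t) := by
    calc _ ≤ |(∫ s in (0:ℝ)..(u r₀), b (r₀, s)) - (∫ s in (0:ℝ)..(u r₀), a (r₀, s))
          + u r₀ * a (r₀, u r₀)| + |a (r₀, u r₀) * deriv u r₀| := abs_add_le _ _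
      _ ≤ _ := by
        have h6 : |(∫ s in (0:ℝ)..(u r₀), b (r₀, s)) - (∫ s in (0:ℝ)..(u r₀), a (r₀, s))
            + u r₀ * a (r₀, u r₀)|
            ≤ |(∫ s in (0:ℝ)..(u r₀), b (r₀, s)) - ∫ s in (0:ℝ)..(u r₀), a (r₀, s)|
              + |u r₀ * a (r₀, u r₀)| := abs_add_le _ _
        have h7 := abs_sub (∫ s in (0:ℝ)..(u r₀), b (r₀, s))
          (∫ s in (0:ℝ)..(u r₀), a (r₀, s))
        linarith
  refine hsum.trans ?_
  nlinarith [mul_nonneg ht hm0.le, sq_nonneg (m - 1), sq_nonneg m, sq_nonneg (m^2 - 1),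
    mul_nonneg (mul_nonneg ht hm0.le) hm0.le,
    mul_nonneg (mul_nonneg (mul_nonneg ht hm0.le) hm0.le) hm0.le]
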